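/- Let L : M^{3×3} → M^{3×3} be linear, self-adjoint with respect to the Frobenius inner product, satisfying LA = L(sym A) for every A and LF : F ≥ c|sym F|² for some c > 0. Define Q₃(F) := LF : F, and for G″ ∈ M^{2×2} define Q₂(G″) := min{ Q₃(F) : F ∈ M^{3×3}, F_{ij} = G″_{ij} for 1 ≤ i,j ≤ 2 }, with L₂ : M^{2×2} → M^{2×2} the self-adjoint linear map satisfying L₂A = L₂(sym A) and Q₂(G″) = L₂G″ : G″. Let G ∈ M^{3×3} be symmetric and suppose that E := LG is symmetric and satisfies E e₃ = 0 (where e₃ is the third standard basis vector). Then Q₃(G) = Q₂(G″) and E″ = L₂ G″, where G″ (resp. E″) denotes the 2×2 matrix with entries G_{ij} (resp. E_{ij}) for 1 ≤ i, j ≤ 2. -/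

import Mathlib

open Matrix MeasureTheory Filter Topology
open scoped ENNReal

noncomputable section

attribute [local instance] Matrix.normedAddCommGroup Matrix.normedSpace

/-- The Frobenius inner product `A : B = tr (Aᵀ B) = ∑ᵢⱼ Aᵢⱼ Bᵢⱼ`. -/
def frobInner {n : ℕ} (A B : Matrix (Fin n) (Fin n) ℝ) : ℝ := ∑ i, ∑ j, A i j * B i j

/-- The Frobenius norm `|A| = (A : A)^{1/2}`. -/
def frobNorm {n : ℕ} (A : Matrix (Fin n) (Fin n) ℝ) : ℝ := Real.sqrt (frobInner A A)

/-- The gradient of a function on 3×3 matrices with respect to the Frobenius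
inner product: `(DW F)ᵢⱼ = ∂W/∂Fᵢⱼ`. -/
def matGrad (w : Matrix (Fin 3) (Fin 3) ℝ → ℝ) (F : Matrix (Fin 3) (Fin 3) ℝ) :
    Matrix (Fin 3) (Fin 3) ℝ :=
  fun i j => fderiv ℝ w F (Matrix.single i j 1)

/-- The set of proper rotations SO(3). -/
def SO3 : Set (Matrix (Fin 3) (Fin 3) ℝ) := {R | Rᵀ * R = 1 ∧ R.det = 1}

/-- The real-valued function associated to an extended-real-valued energy density. -/
def wr (W : Matrix (Fin 3) (Fin 3) ℝ → ℝ≥0∞) : Matrix (Fin 3) (Fin 3) ℝ → ℝ :=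
  fun F => (W F).toReal

/-- The symmetric part `sym A = (A + Aᵀ)/2`. -/
def symPart {n : ℕ} (A : Matrix (Fin n) (Fin n) ℝ) : Matrix (Fin n) (Fin n) ℝ :=
  (2⁻¹ : ℝ) • (A + Aᵀ)

/-- The quadratic form `Q₃(F) = 𝓛F : F`. -/
def Q3 (L : Matrix (Fin 3) (Fin 3) ℝ →ₗ[ℝ] Matrix (Fin 3) (Fin 3) ℝ)
    (F : Matrix (Fin 3) (Fin 3) ℝ) : ℝ := frobInner (L F) F

/-- `F ∈ M³ˣ³` has `G ∈ M²ˣ²` as its upper-left 2×2 submatrix. -/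
def ExtendsTo (G : Matrix (Fin 2) (Fin 2) ℝ) (F : Matrix (Fin 3) (Fin 3) ℝ) : Prop :=
  ∀ i j : Fin 2, F i.castSucc j.castSucc = G i j

/-- The reduced quadratic form `Q₂(G) = inf { Q₃(F) : F″ = G }`. -/
def Q2 (L : Matrix (Fin 3) (Fin 3) ℝ →ₗ[ℝ] Matrix (Fin 3) (Fin 3) ℝ)
    (G : Matrix (Fin 2) (Fin 2) ℝ) : ℝ :=
  sInf {q | ∃ F : Matrix (Fin 3) (Fin 3) ℝ, ExtendsTo G F ∧ q = Q3 L F}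


section Aux

lemma frobInner_comm {n : ℕ} (A B : Matrix (Fin n) (Fin n) ℝ) :
    frobInner A B = frobInner B A := by
  simp [frobInner, mul_comm]

lemma frobInner_add_left {n : ℕ} (A B C : Matrix (Fin n) (Fin n) ℝ) :
    frobInner (A + B) C = frobInner A C + frobInner B C := by
  simp [frobInner, Matrix.add_apply, add_mul, Finset.sum_add_distrib]

lemma frobInner_add_right {n : ℕ} (A B C : Matrix (Fin n) (Fin n) ℝ) :
    frobInner A (B + C) = frobInner A B + frobInner A C := by
  simp [frobInner, Matrix.add_apply, mul_add, Finset.sum_add_distrib]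

lemma frobInner_smul_left {n : ℕ} (t : ℝ) (A B : Matrix (Fin n) (Fin n) ℝ) :
    frobInner (t • A) B = t * frobInner A B := by
  simp [frobInner, Matrix.smul_apply, Finset.mul_sum, mul_assoc]

lemma frobInner_smul_right {n : ℕ} (t : ℝ) (A B : Matrix (Fin n) (Fin n) ℝ) :
    frobInner A (t • B) = t * frobInner A B := by
  rw [frobInner_comm, frobInner_smul_left, frobInner_comm]

lemma frobInner_std {n : ℕ} (M : Matrix (Fin n) (Fin n) ℝ) (i j : Fin n) :
    frobInner M (Matrix.single i j 1) = M i j := by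
  simp [frobInner, Matrix.single, Matrix.of_apply, mul_ite, ite_and,
    Finset.sum_ite_eq, Finset.sum_ite_eq']

lemma frob_expand {n : ℕ} (L : Matrix (Fin n) (Fin n) ℝ →ₗ[ℝ] Matrix (Fin n) (Fin n) ℝ)
    (hsa : ∀ A B, frobInner (L A) B = frobInner A (L B))
    (A B : Matrix (Fin n) (Fin n) ℝ) (t : ℝ) :
    frobInner (L (A + t • B)) (A + t • B)
      = frobInner (L A) A + 2 * t * frobInner (L A) B + t ^ 2 * frobInner (L B) B := by
  have hcross : frobInner (L B) A = frobInner (L A) B := by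
    rw [hsa, frobInner_comm]
  rw [map_add, LinearMap.map_smul, frobInner_add_left, frobInner_add_right, frobInner_add_right,
    frobInner_smul_left, frobInner_smul_right, frobInner_smul_right, frobInner_smul_left,
    hcross]
  ring

/-- Extension of a 2×2 matrix by zeros to a 3×3 matrix. -/
def ext3 (H : Matrix (Fin 2) (Fin 2) ℝ) : Matrix (Fin 3) (Fin 3) ℝ :=
  fun i j => if hi : (i : ℕ) < 2 then (if hj : (j : ℕ) < 2 then H ⟨i, hi⟩ ⟨j, hj⟩ else 0) else 0

lemma ext3_castSucc (H : Matrix (Fin 2) (Fin 2) ℝ) (i j : Fin 2) :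
    ext3 H i.castSucc j.castSucc = H i j := by
  simp [ext3, i.isLt, j.isLt]

lemma ext3_last_row (H : Matrix (Fin 2) (Fin 2) ℝ) (j : Fin 3) :
    ext3 H (Fin.last 2) j = 0 := by
  simp [ext3]

lemma ext3_last_col (H : Matrix (Fin 2) (Fin 2) ℝ) (i : Fin 3) :
    ext3 H i (Fin.last 2) = 0 := by
  simp [ext3]

lemma extendsTo_ext3 (H : Matrix (Fin 2) (Fin 2) ℝ) : ExtendsTo H (ext3 H) :=
  fun i j => ext3_castSucc H i j

lemma frob_ext3 (E : Matrix (Fin 3) (Fin 3) ℝ) (H : Matrix (Fin 2) (Fin 2) ℝ) :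
    frobInner E (ext3 H)
      = frobInner (E.submatrix Fin.castSucc Fin.castSucc) H := by
  rw [frobInner, frobInner, Fin.sum_univ_castSucc]
  simp only [Fin.sum_univ_castSucc (n := 2), ext3_castSucc, ext3_last_row, ext3_last_col,
    mul_zero, add_zero, Finset.sum_const_zero, Matrix.submatrix_apply]

lemma frob_zero_of (E D : Matrix (Fin 3) (Fin 3) ℝ)
    (hEr : ∀ j, E (Fin.last 2) j = 0) (hEc : ∀ i, E i (Fin.last 2) = 0)
    (hD : ∀ i j : Fin 2, D i.castSucc j.castSucc = 0) :
    frobInner E D = 0 := by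
  have hterm : ∀ i j : Fin 3, E i j * D i j = 0 := by
    intro i j
    rcases Fin.eq_castSucc_or_eq_last i with ⟨i', rfl⟩ | rfl
    · rcases Fin.eq_castSucc_or_eq_last j with ⟨j', rfl⟩ | rfl
      · rw [hD]; ring
      · rw [hEc]; ring
    · rw [hEr]; ring
  simp [frobInner, hterm]

end Aux

/-- if `G` is symmetric, `E = 𝓛G` is symmetric and `E e₃ = 0`, then
`Q₃(G) = Q₂(G″)` and `E″ = 𝓛₂ G″`. -/
theorem statement13 (L : Matrix (Fin 3) (Fin 3) ℝ →ₗ[ℝ] Matrix (Fin 3) (Fin 3) ℝ)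
    (c : ℝ) (hc : 0 < c)
    (hsa : ∀ A B : Matrix (Fin 3) (Fin 3) ℝ, frobInner (L A) B = frobInner A (L B))
    (hLsym : ∀ A : Matrix (Fin 3) (Fin 3) ℝ, L A = L (symPart A))
    (hpos : ∀ F : Matrix (Fin 3) (Fin 3) ℝ, c * frobNorm (symPart F) ^ 2 ≤ Q3 L F)
    (L2 : Matrix (Fin 2) (Fin 2) ℝ →ₗ[ℝ] Matrix (Fin 2) (Fin 2) ℝ)
    (hsa2 : ∀ A B : Matrix (Fin 2) (Fin 2) ℝ, frobInner (L2 A) B = frobInner A (L2 B))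
    (hL2sym : ∀ A : Matrix (Fin 2) (Fin 2) ℝ, L2 A = L2 (symPart A))
    (hQ2 : ∀ G : Matrix (Fin 2) (Fin 2) ℝ, Q2 L G = frobInner (L2 G) G)
    (G : Matrix (Fin 3) (Fin 3) ℝ) (hGsym : G.IsSymm)
    (hEsym : (L G).IsSymm)
    (hEe3 : (L G) *ᵥ Pi.single (2 : Fin 3) (1:ℝ) = 0) :
    Q3 L G = Q2 L (G.submatrix Fin.castSucc Fin.castSucc) ∧
    (L G).submatrix Fin.castSucc Fin.castSucc = L2 (G.submatrix Fin.castSucc Fin.castSucc) := by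
  classical
  set G2 := G.submatrix Fin.castSucc Fin.castSucc with hG2
  -- Lower bound 0 for all the Q2 sets
  have hQ3nonneg : ∀ F, (0:ℝ) ≤ Q3 L F := by
    intro F
    have h1 := hpos F
    have h2 : 0 ≤ c * frobNorm (symPart F) ^ 2 :=
      mul_nonneg hc.le (pow_nonneg (Real.sqrt_nonneg _) 2)
    linarith
  have hbdd : ∀ G' : Matrix (Fin 2) (Fin 2) ℝ,
      BddBelow {q | ∃ F, ExtendsTo G' F ∧ q = Q3 L F} := by
    intro G'
    refine ⟨0, ?_⟩
    rintro q ⟨F, -, rfl⟩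
    exact hQ3nonneg F
  -- E has zero last row and column
  have hEc : ∀ i, L G i (Fin.last 2) = 0 := by
    intro i
    have := congrFun hEe3 i
    simpa [Matrix.mulVec, dotProduct, Pi.single_apply, Finset.sum_ite_eq'] using this
  have hEr : ∀ j, L G (Fin.last 2) j = 0 := by
    intro j
    have h := congrFun (congrFun hEsym (Fin.last 2)) j
    rw [Matrix.transpose_apply] at h
    rw [← h]
    exact hEc j
  have hGext : ExtendsTo G2 G := fun i j => rfl
  have hmem : Q3 L G ∈ {q | ∃ F, ExtendsTo G2 F ∧ q = Q3 L F} := ⟨G, hGext, rfl⟩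
  have hlb : ∀ q ∈ {q | ∃ F, ExtendsTo G2 F ∧ q = Q3 L F}, Q3 L G ≤ q := by
    rintro q ⟨F, hF, rfl⟩
    have hFeq : F = G + (1:ℝ) • (F - G) := by simp
    have hexp : Q3 L F = Q3 L G + 2 * 1 * frobInner (L G) (F - G)
        + 1 ^ 2 * frobInner (L (F - G)) (F - G) := by
      conv_lhs => rw [Q3, hFeq]
      rw [frob_expand L hsa, Q3]
    have hcross : frobInner (L G) (F - G) = 0 := by
      refine frob_zero_of _ _ hEr hEc ?_
      intro i j
      rw [Matrix.sub_apply, hF i j]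
      simp [hG2]
    have hrest : (0:ℝ) ≤ frobInner (L (F - G)) (F - G) := hQ3nonneg (F - G)
    rw [hexp, hcross]
    simp only [Q3] at *
    linarith
  have hpart1 : Q3 L G = Q2 L G2 := by
    refine le_antisymm (le_csInf ⟨_, hmem⟩ hlb) (csInf_le (hbdd G2) hmem)
  refine ⟨hpart1, ?_⟩
  -- Part 2
  have key : ∀ H : Matrix (Fin 2) (Fin 2) ℝ,
      frobInner ((L G).submatrix Fin.castSucc Fin.castSucc) H = frobInner (L2 G2) H := by
    intro H
    set a : ℝ := frobInner ((L G).submatrix Fin.castSucc Fin.castSucc) H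
      - frobInner (L2 G2) H with ha
    set b : ℝ := Q3 L (ext3 H) - frobInner (L2 H) H with hb
    have hbnn : 0 ≤ b := by
      have h1 : Q2 L H ≤ Q3 L (ext3 H) :=
        csInf_le (hbdd H) ⟨ext3 H, extendsTo_ext3 H, rfl⟩
      rw [hQ2 H] at h1
      simpa [hb] using sub_nonneg.mpr h1
    have hineq : ∀ t : ℝ, 0 ≤ 2 * t * a + t ^ 2 * b := by
      intro t
      have h1 : Q2 L (G2 + t • H) ≤ Q3 L (G + t • ext3 H) := by
        refine csInf_le (hbdd _) ⟨G + t • ext3 H, ?_, rfl⟩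
        intro i j
        simp [Matrix.add_apply, Matrix.smul_apply, ext3_castSucc, hG2]
      have hL : Q2 L (G2 + t • H) = frobInner (L2 G2) G2
          + 2 * t * frobInner (L2 G2) H + t ^ 2 * frobInner (L2 H) H := by
        rw [hQ2, frob_expand L2 hsa2]
      have hR : Q3 L (G + t • ext3 H) = frobInner (L2 G2) G2
          + 2 * t * frobInner ((L G).submatrix Fin.castSucc Fin.castSucc) H
          + t ^ 2 * Q3 L (ext3 H) := by
        rw [Q3, frob_expand L hsa, frob_ext3]
        have : frobInner (L G) G = frobInner (L2 G2) G2 := by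
          rw [show frobInner (L G) G = Q3 L G from rfl, hpart1, hQ2]
        rw [this, Q3]
      rw [hL, hR] at h1
      rw [ha, hb]
      nlinarith [h1]
    have hb2 : (0:ℝ) < b + 1 := by linarith
    have h := hineq (-a / (b + 1))
    have ha2 : a ^ 2 ≤ 0 := by
      have h' : 0 ≤ 2 * (-a / (b + 1)) * a + (-a / (b + 1)) ^ 2 * b := h
      have hx : 2 * (-a / (b + 1)) * a + (-a / (b + 1)) ^ 2 * b
          = (-a ^ 2 * (b + 2)) / (b + 1) ^ 2 := by
        field_simp
        ring
      rw [hx] at h'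
      have hpos2 : (0:ℝ) < (b + 1) ^ 2 := by positivity
      rcases div_nonneg_iff.mp h' with ⟨h2, -⟩ | ⟨-, h3⟩
      · nlinarith [sq_nonneg a, hbnn, h2]
      · linarith [hpos2, h3]
    have : a = 0 := by nlinarith [sq_nonneg a]
    linarith [sub_eq_zero.mp this]
  ext i j
  have h := key (Matrix.single i j 1)
  rw [frobInner_std, frobInner_std] at h
  exact h
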